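/- A set of transpositions in the symmetric group on a finite type α generates the full symmetric group if and only if the graph on α whose edges are the supports of the transpositions is connected. -/

import Mathlib

lemma swap_mem_of_walk {α : Type*} [DecidableEq α]
    (S : Set (Equiv.Perm α)) (G : SimpleGraph α)
    (hG : ∀ a b, G.Adj a b ↔ a ≠ b ∧ Equiv.swap a b ∈ S) :
    ∀ {a b : α}, G.Walk a b → a ≠ b → Equiv.swap a b ∈ Subgroup.closure S := by
  intro a b w
  induction w with
  | nil => intro h; exact absurd rfl h
  | @cons u v c h p ih =>
    intro hab
    by_cases hvc : v = c
    · subst hvc; exact Subgroup.subset_closure ((hG u v).mp h).2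
    · have h1 : Equiv.swap u v ∈ Subgroup.closure S :=
        Subgroup.subset_closure ((hG u v).mp h).2
      have h2 := ih hvc
      have huv : u ≠ v := ((hG u v).mp h).1
      have key : Equiv.swap u v * Equiv.swap v c * (Equiv.swap u v)⁻¹ =
          Equiv.swap u c := by
        rw [← Equiv.swap_apply_apply, Equiv.swap_apply_right,
          Equiv.swap_apply_of_ne_of_ne (Ne.symm hab) (Ne.symm hvc)]
      rw [← key]
      exact mul_mem (mul_mem h1 h2) (inv_mem h1)

/-- A set of transpositions generates the full symmetric group on a finite type α
(with at least two elements) iff the graph whose edges are the supports of the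
transpositions is connected. -/
theorem swaps_generate_iff_connected {α : Type*} [Fintype α] [DecidableEq α]
    (hcard : 2 ≤ Fintype.card α) (S : Set (Equiv.Perm α))
    (hswap : ∀ σ ∈ S, Equiv.Perm.IsSwap σ)
    (G : SimpleGraph α)
    (hG : ∀ a b, G.Adj a b ↔ a ≠ b ∧ Equiv.swap a b ∈ S) :
    Subgroup.closure S = ⊤ ↔ G.Connected := by
  have hne : Nonempty α := Fintype.card_pos_iff.mp (by omega)
  constructor
  · intro htop
    -- subgroup of permutations preserving components
    let H : Subgroup (Equiv.Perm α) :=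
      { carrier := {σ | ∀ a, G.Reachable a (σ a)}
        one_mem' := fun a => SimpleGraph.Reachable.refl a
        mul_mem' := by
          intro σ τ hσ hτ a
          exact (hτ a).trans (hσ (τ a))
        inv_mem' := by
          intro σ hσ a
          have := hσ (σ⁻¹ a)
          rw [← Equiv.Perm.mul_apply, mul_inv_cancel, Equiv.Perm.one_apply] at this
          exact this.symm }
    have hSH : S ⊆ H := by
      intro σ hσ
      obtain ⟨x, y, hxy, rfl⟩ := hswap σ hσ
      have hadj : G.Adj x y := (hG x y).mpr ⟨hxy, hσ⟩
      intro a
      rcases eq_or_ne a x with rfl | hax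
      · rw [Equiv.swap_apply_left]; exact hadj.reachable
      rcases eq_or_ne a y with rfl | hay
      · rw [Equiv.swap_apply_right]; exact hadj.symm.reachable
      · rw [Equiv.swap_apply_of_ne_of_ne hax hay]
    have hH : ∀ σ : Equiv.Perm α, σ ∈ H := by
      intro σ
      have : σ ∈ Subgroup.closure S := htop ▸ Subgroup.mem_top σ
      exact (Subgroup.closure_le H).mpr hSH this
    rw [SimpleGraph.connected_iff]
    refine ⟨fun a b => ?_, hne⟩
    rcases eq_or_ne a b with rfl | hab
    · exact SimpleGraph.Reachable.refl a
    · have := hH (Equiv.swap a b) a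
      rwa [Equiv.swap_apply_left] at this
  · intro hconn
    rw [eq_top_iff, ← Equiv.Perm.closure_isSwap, Subgroup.closure_le]
    intro σ hσ
    obtain ⟨x, y, hxy, rfl⟩ := hσ
    obtain ⟨w⟩ := hconn.preconnected x y
    exact swap_mem_of_walk S G hG w hxy
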